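/- For every nonnegative integer n and every x, x * phi_n(x) = sum over k from 0 to n of (-1)^(n-k) binomial(n,k) * phi_{k+1}(x), where phi_n is the exponential polynomial. -/

import Mathlib

open Finset Polynomial

/-- Stirling numbers of the second kind. -/
def S : ℕ → ℕ → ℕ
  | 0, 0 => 1
  | 0, _ + 1 => 0
  | _ + 1, 0 => 0
  | n + 1, k + 1 => (k + 1) * S n (k + 1) + S n k

/-- Exponential (Bell) polynomials. -/
noncomputable def phi (n : ℕ) : Polynomial ℤ :=
  ∑ k ∈ range (n + 1), Polynomial.C (S n k : ℤ) * Polynomial.X ^ k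

lemma S_eq_zero : ∀ n k : ℕ, n < k → S n k = 0
  | 0, _ + 1, _ => rfl
  | n + 1, k + 1, h => by
    have h' : n < k := Nat.lt_of_succ_lt_succ h
    show (k + 1) * S n (k + 1) + S n k = 0
    rw [S_eq_zero n (k + 1) (h'.trans (Nat.lt_succ_self k)), S_eq_zero n k h']
    simp

lemma S_succ_zero (n : ℕ) : S (n + 1) 0 = 0 := rfl

lemma phi_zero : phi 0 = 1 := by
  have : S 0 0 = 1 := rfl
  simp [phi, this]

lemma phi_succ (n : ℕ) : phi (n + 1) = X * (phi n + derivative (phi n)) := by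
  have hd : X * derivative (phi n) =
      ∑ k ∈ range (n + 1), Polynomial.C ((k : ℤ) * S n k) * X ^ k := by
    rw [phi, derivative_sum, Finset.mul_sum]
    refine Finset.sum_congr rfl fun k _ => ?_
    rcases k with _ | k
    · simp
    · rw [derivative_C_mul, derivative_X_pow]
      push_cast
      simp only [map_add, map_mul]
      ring
  have h1 : phi (n + 1) =
      ∑ k ∈ range (n + 1), Polynomial.C (S (n + 1) (k + 1) : ℤ) * X ^ (k + 1) := by
    rw [phi, Finset.sum_range_succ']
    simp [S_succ_zero]
  rw [h1]
  have h2 : ∀ k, S (n + 1) (k + 1) = (k + 1) * S n (k + 1) + S n k := fun k => rfl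
  have hsplit : ∑ k ∈ range (n + 1), Polynomial.C (S (n + 1) (k + 1) : ℤ) * X ^ (k + 1)
      = (∑ k ∈ range (n + 1), Polynomial.C (((k + 1 : ℕ) : ℤ) * S n (k + 1)) * X ^ (k + 1))
        + ∑ k ∈ range (n + 1), Polynomial.C (S n k : ℤ) * X ^ (k + 1) := by
    rw [← Finset.sum_add_distrib]
    refine Finset.sum_congr rfl fun k _ => ?_
    rw [h2]
    push_cast
    simp only [map_add, map_mul]
    ring
  rw [hsplit, mul_add]
  rw [add_comm (X * phi n)]
  congr 1
  · -- derivative part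
    rw [hd]
    have hlast : Polynomial.C (((n + 1 : ℕ) : ℤ) * S n (n + 1)) * X ^ (n + 1) = 0 := by
      rw [S_eq_zero n (n + 1) (Nat.lt_succ_self n)]
      simp
    calc ∑ k ∈ range (n + 1), Polynomial.C (((k + 1 : ℕ) : ℤ) * S n (k + 1)) * X ^ (k + 1)
        = ∑ k ∈ range (n + 2), Polynomial.C ((k : ℤ) * S n k) * X ^ k := by
          rw [Finset.sum_range_succ' (fun k => Polynomial.C ((k : ℤ) * S n k) * X ^ k) (n + 1)]
          simp
      _ = ∑ k ∈ range (n + 1), Polynomial.C ((k : ℤ) * S n k) * X ^ k := by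
          rw [Finset.sum_range_succ (fun k => Polynomial.C ((k : ℤ) * S n k) * X ^ k) (n + 1)]
          rw [hlast, add_zero]
  · rw [phi, Finset.mul_sum]
    refine Finset.sum_congr rfl fun k _ => ?_
    ring

lemma phi_succ_sum (n : ℕ) :
    phi (n + 1) = X * ∑ k ∈ range (n + 1), Polynomial.C ((n.choose k : ℤ)) * phi k := by
  induction n with
  | zero => simp [phi_succ, phi_zero]
  | succ n ih =>
      set A : Polynomial ℤ := ∑ k ∈ range (n + 1), Polynomial.C ((n.choose k : ℤ)) * phi k
        with hA
      have hdA : derivative A = ∑ k ∈ range (n + 1),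
          Polynomial.C ((n.choose k : ℤ)) * derivative (phi k) := by
        rw [hA, derivative_sum]
        exact Finset.sum_congr rfl fun k _ => by rw [derivative_C_mul]
      have key : ∑ k ∈ range (n + 2), Polynomial.C (((n+1).choose k : ℤ)) * phi k
          = A + X * A + X * derivative A := by
        have hstep : ∑ k ∈ range (n + 2), Polynomial.C (((n+1).choose k : ℤ)) * phi k
            = (∑ k ∈ range (n + 1), Polynomial.C (((n+1).choose (k+1) : ℤ)) * phi (k+1))
              + phi 0 := by
          rw [Finset.sum_range_succ' (fun k => Polynomial.C (((n+1).choose k : ℤ)) * phi k)]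
          simp
        rw [hstep]
        have hsplit : ∑ k ∈ range (n + 1), Polynomial.C (((n+1).choose (k+1) : ℤ)) * phi (k+1)
            = (∑ k ∈ range (n + 1), Polynomial.C ((n.choose (k+1) : ℤ)) * phi (k+1))
              + ∑ k ∈ range (n + 1), Polynomial.C ((n.choose k : ℤ)) * phi (k+1) := by
          rw [← Finset.sum_add_distrib]
          refine Finset.sum_congr rfl fun k _ => ?_
          rw [Nat.choose_succ_succ]
          push_cast
          rw [Polynomial.C_add]
          ring
        rw [hsplit]
        have hfirst : (∑ k ∈ range (n + 1), Polynomial.C ((n.choose (k+1) : ℤ)) * phi (k+1))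
            + phi 0 = A := by
          rw [hA, Finset.sum_range_succ' (fun k => Polynomial.C ((n.choose k : ℤ)) * phi k) n]
          rw [Finset.sum_range_succ (fun k => Polynomial.C ((n.choose (k+1) : ℤ)) * phi (k+1)) n]
          rw [Nat.choose_succ_self]
          simp
        have hsecond : ∑ k ∈ range (n + 1), Polynomial.C ((n.choose k : ℤ)) * phi (k+1)
            = X * A + X * derivative A := by
          have : ∀ k, phi (k + 1) = X * phi k + X * derivative (phi k) := by
            intro k; rw [phi_succ]; ring
          calc ∑ k ∈ range (n + 1), Polynomial.C ((n.choose k : ℤ)) * phi (k+1)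
              = ∑ k ∈ range (n + 1), (X * (Polynomial.C ((n.choose k : ℤ)) * phi k)
                  + X * (Polynomial.C ((n.choose k : ℤ)) * derivative (phi k))) := by
                refine Finset.sum_congr rfl fun k _ => ?_
                rw [this]
                ring
            _ = X * A + X * derivative A := by
                rw [Finset.sum_add_distrib, ← Finset.mul_sum, ← Finset.mul_sum, hA, hdA]
        rw [add_right_comm, hfirst, hsecond]
        ring
      rw [key, phi_succ, ih]
      rw [derivative_mul, derivative_X]
      ring

lemma delta_sum {j n : ℕ} (hj : j ≤ n) :
    ∑ k ∈ range (n + 1), (-1 : ℤ) ^ (n - k) * n.choose k * k.choose j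
      = if j = n then 1 else 0 := by
  have hsub : Ico j (n + 1) ⊆ range (n + 1) := by
    intro x hx
    simp only [mem_Ico] at hx
    simp [hx.2]
  have h0 : ∑ k ∈ range (n + 1), (-1 : ℤ) ^ (n - k) * n.choose k * k.choose j
      = ∑ k ∈ Ico j (n + 1), (-1 : ℤ) ^ (n - k) * n.choose k * k.choose j := by
    refine (Finset.sum_subset hsub fun x hx hnx => ?_).symm
    simp only [mem_range] at hx
    simp only [mem_Ico, not_and, not_lt] at hnx
    have hxj : x < j := by
      by_contra h
      exact absurd (hnx (le_of_not_gt h)) (not_le.2 hx)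
    rw [Nat.choose_eq_zero_of_lt hxj]
    simp
  rw [h0, Finset.sum_Ico_eq_sum_range]
  have hm : n + 1 - j = (n - j) + 1 := by omega
  rw [hm]
  set m := n - j with hmdef
  have hterm : ∀ i ∈ range (m + 1),
      (-1 : ℤ) ^ (n - (j + i)) * n.choose (j + i) * (j + i).choose j
        = ((-1 : ℤ) ^ m * n.choose j) * ((-1 : ℤ) ^ i * m.choose i) := by
    intro i hi
    simp only [mem_range] at hi
    have him : i ≤ m := Nat.lt_succ_iff.mp hi
    have h1 : n.choose (j + i) * (j + i).choose j = n.choose j * m.choose i := by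
      have h := Nat.choose_mul (n := n) (k := j + i) (s := j) (Nat.le_add_right j i)
      rw [Nat.add_sub_cancel_left] at h
      rw [h, hmdef]
    have h2 : n - (j + i) = m - i := by omega
    have h3 : (-1 : ℤ) ^ (m - i) = (-1 : ℤ) ^ m * (-1 : ℤ) ^ i := by
      have : m + i = (m - i) + 2 * i := by omega
      calc (-1 : ℤ) ^ (m - i) = (-1 : ℤ) ^ (m - i) * ((-1 : ℤ) ^ 2) ^ i := by norm_num
        _ = (-1 : ℤ) ^ ((m - i) + 2 * i) := by rw [← pow_mul, ← pow_add]
        _ = (-1 : ℤ) ^ (m + i) := by rw [← this]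
        _ = (-1 : ℤ) ^ m * (-1 : ℤ) ^ i := pow_add _ _ _
    rw [h2, h3]
    have h1' : (n.choose (j + i) : ℤ) * (j + i).choose j = (n.choose j : ℤ) * m.choose i := by
      exact_mod_cast congrArg (Nat.cast : ℕ → ℤ) h1
    calc (-1 : ℤ) ^ m * (-1 : ℤ) ^ i * n.choose (j + i) * (j + i).choose j
        = (-1 : ℤ) ^ m * (-1 : ℤ) ^ i * ((n.choose (j + i) : ℤ) * (j + i).choose j) := by ring
      _ = (-1 : ℤ) ^ m * (-1 : ℤ) ^ i * ((n.choose j : ℤ) * m.choose i) := by rw [h1']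
      _ = ((-1 : ℤ) ^ m * n.choose j) * ((-1 : ℤ) ^ i * m.choose i) := by ring
  rw [Finset.sum_congr rfl hterm, ← Finset.mul_sum, Int.alternating_sum_range_choose]
  by_cases hjn : j = n
  · have : m = 0 := by omega
    simp [this, hjn]
  · have : m ≠ 0 := by omega
    simp [this, hjn]

theorem stmt5 (n : ℕ) :
    Polynomial.X * phi n =
      ∑ k ∈ range (n + 1), Polynomial.C ((-1 : ℤ) ^ (n - k) * n.choose k) * phi (k + 1) := by
  have hext : ∀ k ∈ range (n + 1),
      ∑ j ∈ range (k + 1), Polynomial.C ((k.choose j : ℤ)) * phi j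
        = ∑ j ∈ range (n + 1), Polynomial.C ((k.choose j : ℤ)) * phi j := by
    intro k hk
    simp only [mem_range] at hk
    refine Finset.sum_subset (Finset.range_subset_range.2 (by omega)) fun j hj hnj => ?_
    simp only [mem_range, not_lt] at hj hnj
    rw [Nat.choose_eq_zero_of_lt hnj]
    simp
  symm
  calc ∑ k ∈ range (n + 1), Polynomial.C ((-1 : ℤ) ^ (n - k) * n.choose k) * phi (k + 1)
      = ∑ k ∈ range (n + 1), ∑ j ∈ range (n + 1),
          Polynomial.X * (Polynomial.C ((-1 : ℤ) ^ (n - k) * n.choose k * k.choose j) * phi j) := by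
        refine Finset.sum_congr rfl fun k hk => ?_
        rw [phi_succ_sum, hext k hk, Finset.mul_sum, Finset.mul_sum]
        refine Finset.sum_congr rfl fun j _ => ?_
        simp only [Polynomial.C_mul]
        ring
    _ = ∑ j ∈ range (n + 1), ∑ k ∈ range (n + 1),
          Polynomial.X * (Polynomial.C ((-1 : ℤ) ^ (n - k) * n.choose k * k.choose j) * phi j) :=
        Finset.sum_comm
    _ = ∑ j ∈ range (n + 1), Polynomial.X *
          (Polynomial.C (∑ k ∈ range (n + 1), (-1 : ℤ) ^ (n - k) * n.choose k * k.choose j)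
            * phi j) := by
        refine Finset.sum_congr rfl fun j _ => ?_
        rw [map_sum, Finset.sum_mul, Finset.mul_sum]
    _ = ∑ j ∈ range (n + 1), Polynomial.X *
          (Polynomial.C (if j = n then (1 : ℤ) else 0) * phi j) := by
        refine Finset.sum_congr rfl fun j hj => ?_
        simp only [mem_range] at hj
        rw [delta_sum (by omega)]
    _ = ∑ j ∈ range (n + 1), (if j = n then Polynomial.X * phi j else 0) := by
        refine Finset.sum_congr rfl fun j _ => ?_
        split <;> simp
    _ = Polynomial.X * phi n := by
        rw [Finset.sum_ite_eq' (range (n + 1)) n (fun j => Polynomial.X * phi j)]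
        simp
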